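/- Let k ≥ 1, let σ be a permutation (an Equiv) of Fin k → ZMod 2, and let g : (Fin k → ZMod 2) → ZMod 4 be arbitrary. Define f : (Fin k → ZMod 2) × (Fin k → ZMod 2) → ZMod 4 by f(x, y) = 2 * ((∑ j, (σ x) j * y j).val : ZMod 4) + g(x) (inner sum in ZMod 2). Then for every u, v : Fin k → ZMod 2, f̂(u, v) = 2^k * Complex.I ^ (g (σ⁻¹ v)).val * (-1) ^ (∑ j, u j * (σ⁻¹ v) j).val. In particular Complex.normSq (f̂(u,v)) = 4^k for all (u,v), so f is a Z_4-valued bent function in 2k variables (a quaternary Maiorana–McFarland bent function). -/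

import Mathlib

/-- The Fourier transform of a `ZMod 4`-valued function of `2k` binary variables. -/
noncomputable def fourier4'' {k : ℕ}
    (f : (Fin k → ZMod 2) × (Fin k → ZMod 2) → ZMod 4)
    (u v : Fin k → ZMod 2) : ℂ :=
  ∑ p : (Fin k → ZMod 2) × (Fin k → ZMod 2),
    Complex.I ^ (f p).val * (-1 : ℂ) ^ ((∑ j, u j * p.1 j) + (∑ j, v j * p.2 j)).val


lemma chi_add' (a b : ZMod 2) : (-1:ℂ)^((a+b).val) = (-1)^a.val * (-1)^b.val := by
  fin_cases a <;> fin_cases b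
  · show (-1:ℂ)^(0:ℕ) = (-1)^(0:ℕ) * (-1)^(0:ℕ); norm_num
  · show (-1:ℂ)^(1:ℕ) = (-1)^(0:ℕ) * (-1)^(1:ℕ); norm_num
  · show (-1:ℂ)^(1:ℕ) = (-1)^(1:ℕ) * (-1)^(0:ℕ); norm_num
  · show (-1:ℂ)^(0:ℕ) = (-1)^(1:ℕ) * (-1)^(1:ℕ); norm_num

lemma ipow' (s : ZMod 2) (c : ZMod 4) :
    Complex.I ^ ((2 * (s.val : ZMod 4) + c).val) = (-1:ℂ)^s.val * Complex.I ^ c.val := by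
  fin_cases s <;> fin_cases c
  · show Complex.I^(0:ℕ) = (-1:ℂ)^(0:ℕ) * Complex.I^(0:ℕ); norm_num
  · show Complex.I^(1:ℕ) = (-1:ℂ)^(0:ℕ) * Complex.I^(1:ℕ); norm_num
  · show Complex.I^(2:ℕ) = (-1:ℂ)^(0:ℕ) * Complex.I^(2:ℕ); norm_num
  · show Complex.I^(3:ℕ) = (-1:ℂ)^(0:ℕ) * Complex.I^(3:ℕ); norm_num
  · show Complex.I^(2:ℕ) = (-1:ℂ)^(1:ℕ) * Complex.I^(0:ℕ); simp [Complex.I_sq]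
  · show Complex.I^(3:ℕ) = (-1:ℂ)^(1:ℕ) * Complex.I^(1:ℕ); simp [pow_succ, Complex.I_sq]
  · show Complex.I^(0:ℕ) = (-1:ℂ)^(1:ℕ) * Complex.I^(2:ℕ); simp [Complex.I_sq]
  · show Complex.I^(1:ℕ) = (-1:ℂ)^(1:ℕ) * Complex.I^(3:ℕ); simp [pow_succ, Complex.I_sq]

lemma chi_one' : (-1:ℂ)^((1:ZMod 2)).val = -1 := by
  show (-1:ℂ)^(1:ℕ) = -1; norm_num

lemma sum_chi' {k : ℕ} (w : Fin k → ZMod 2) :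
    ∑ y : Fin k → ZMod 2, (-1:ℂ)^((∑ j, w j * y j).val) =
      if w = 0 then (2:ℂ)^k else 0 := by
  split_ifs with hw
  · subst hw
    simp only [Pi.zero_apply, zero_mul, Finset.sum_const_zero, ZMod.val_zero, pow_zero]
    simp [Finset.card_univ]
  · obtain ⟨j0, hj0⟩ := Function.ne_iff.mp hw
    have hw1 : w j0 = 1 := by
      have : ∀ a : ZMod 2, a ≠ 0 → a = 1 := by decide
      exact this _ hj0
    apply Finset.sum_ninvolution
      (g := fun y => Function.update y j0 (y j0 + 1))
    · intro y
      have hsum : ∑ j, w j * Function.update y j0 (y j0 + 1) j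
          = (∑ j, w j * y j) + 1 := by
        have : ∀ j, w j * Function.update y j0 (y j0 + 1) j
            = w j * y j + if j = j0 then 1 else 0 := by
          intro j
          by_cases h : j = j0
          · subst h; simp [Function.update_self, hw1, mul_add]
          · simp [Function.update_of_ne h, h]
        rw [Finset.sum_congr rfl fun j _ => this j, Finset.sum_add_distrib,
          Finset.sum_ite_eq' Finset.univ j0]
        simp
      rw [hsum, chi_add', chi_one']
      ring
    · intro y _ h
      have := congrFun h j0
      rw [Function.update_self] at this
      exact (by decide : ∀ a : ZMod 2, ¬ a + 1 = a) _ this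
    · intro y; exact Finset.mem_univ _
    · intro y
      funext j
      by_cases h : j = j0
      · subst h
        rw [Function.update_self, Function.update_self]
        exact (by decide : ∀ a : ZMod 2, a + 1 + 1 = a) _
      · rw [Function.update_of_ne h, Function.update_of_ne h]

/-- Quaternary Maiorana–McFarland construction: for a permutation `σ` of `Fin k → ZMod 2`
and an arbitrary `g`, the function `f(x,y) = 2(σ(x)·y) + g(x)` has flat Fourier spectrum
`f̂(u,v) = 2^k · i^{g(σ⁻¹(v))} · (-1)^{u·σ⁻¹(v)}`, hence is bent in `2k` variables. -/
theorem stmt12 (k : ℕ) (hk : 1 ≤ k) (σ : Equiv.Perm (Fin k → ZMod 2))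
    (g : (Fin k → ZMod 2) → ZMod 4)
    (f : (Fin k → ZMod 2) × (Fin k → ZMod 2) → ZMod 4)
    (hf : ∀ p : (Fin k → ZMod 2) × (Fin k → ZMod 2),
      f p = 2 * ((∑ j, (σ p.1) j * p.2 j).val : ZMod 4) + g p.1) :
    ∀ u v : Fin k → ZMod 2,
      fourier4'' f u v =
        2 ^ k * Complex.I ^ (g (σ⁻¹ v)).val * (-1 : ℂ) ^ (∑ j, u j * (σ⁻¹ v) j).val ∧
      Complex.normSq (fourier4'' f u v) = 4 ^ k := by
  intro u v
  have key : fourier4'' f u v =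
      2 ^ k * Complex.I ^ (g (σ⁻¹ v)).val * (-1 : ℂ) ^ (∑ j, u j * (σ⁻¹ v) j).val := by
    unfold fourier4''
    rw [Fintype.sum_prod_type]
    have step : ∀ x y : Fin k → ZMod 2,
        Complex.I ^ (f (x, y)).val *
          (-1 : ℂ) ^ ((∑ j, u j * x j) + (∑ j, v j * y j)).val
        = (Complex.I ^ (g x).val * (-1:ℂ) ^ (∑ j, u j * x j).val) *
            (-1:ℂ) ^ ((∑ j, (σ x j + v j) * y j)).val := by
      intro x y
      rw [hf (x, y), ipow', chi_add']
      have : (∑ j, (σ x j + v j) * y j) = (∑ j, σ x j * y j) + ∑ j, v j * y j := by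
        rw [← Finset.sum_add_distrib]
        exact Finset.sum_congr rfl fun j _ => by ring
      rw [this, chi_add']
      ring
    have := Finset.sum_congr rfl fun x (_ : x ∈ Finset.univ) =>
      Finset.sum_congr rfl fun y (_ : y ∈ Finset.univ) => step x y
    rw [this]
    have inner : ∀ x : Fin k → ZMod 2,
        ∑ y : Fin k → ZMod 2, (-1:ℂ) ^ ((∑ j, (σ x j + v j) * y j)).val
          = if σ x + v = 0 then (2:ℂ)^k else 0 := by
      intro x
      have := sum_chi' (fun j => σ x j + v j)
      exact this
    calc ∑ x : Fin k → ZMod 2, ∑ y : Fin k → ZMod 2,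
          (Complex.I ^ (g x).val * (-1:ℂ) ^ (∑ j, u j * x j).val) *
            (-1:ℂ) ^ ((∑ j, (σ x j + v j) * y j)).val
        = ∑ x : Fin k → ZMod 2,
            (Complex.I ^ (g x).val * (-1:ℂ) ^ (∑ j, u j * x j).val) *
              (if σ x + v = 0 then (2:ℂ)^k else 0) := by
          refine Finset.sum_congr rfl fun x _ => ?_
          rw [← Finset.mul_sum, inner x]
      _ = ∑ x : Fin k → ZMod 2,
            if x = σ⁻¹ v then
              (Complex.I ^ (g x).val * (-1:ℂ) ^ (∑ j, u j * x j).val) * (2:ℂ)^k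
            else 0 := by
          refine Finset.sum_congr rfl fun x _ => ?_
          have hiff : σ x + v = 0 ↔ x = σ⁻¹ v := by
            constructor
            · intro h
              have : σ x = v := by
                funext j
                have := congrFun h j
                simp only [Pi.add_apply, Pi.zero_apply] at this
                have h2 : ∀ a b : ZMod 2, a + b = 0 → a = b := by decide
                exact h2 _ _ this
              rw [← this]; simp
            · intro h
              subst h
              funext j
              simp only [Pi.add_apply, Pi.zero_apply, show σ (σ⁻¹ v) = v from σ.apply_symm_apply v]
              exact CharTwo.add_self_eq_zero _
          by_cases h : x = σ⁻¹ v
          · rw [if_pos (hiff.mpr h), if_pos h]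
          · rw [if_neg (fun hh => h (hiff.mp hh)), if_neg h, mul_zero]
      _ = (Complex.I ^ (g (σ⁻¹ v)).val * (-1:ℂ) ^ (∑ j, u j * (σ⁻¹ v) j).val) * (2:ℂ)^k := by
          rw [Finset.sum_ite_eq' Finset.univ (σ⁻¹ v)]
          simp
      _ = 2 ^ k * Complex.I ^ (g (σ⁻¹ v)).val * (-1 : ℂ) ^ (∑ j, u j * (σ⁻¹ v) j).val := by
          ring
  refine ⟨key, ?_⟩
  rw [key]
  have h1 : Complex.normSq (Complex.I ^ (g (σ⁻¹ v)).val) = 1 := by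
    rw [map_pow, Complex.normSq_I, one_pow]
  have h2 : Complex.normSq ((-1 : ℂ) ^ (∑ j, u j * (σ⁻¹ v) j).val) = 1 := by
    rw [map_pow]
    simp [Complex.normSq_apply]
  have h3 : Complex.normSq ((2:ℂ) ^ k) = 4 ^ k := by
    rw [map_pow]
    norm_num [Complex.normSq_apply]
  rw [Complex.normSq_mul, Complex.normSq_mul, h1, h2, h3, mul_one, mul_one]
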